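/- arXiv:1909.02421 — 2 statements merged into one kernel-verified Lean document; each statement's English description precedes it below -/
import Mathlib

section
/- Let k ≥ 3 and consider the k-swap game with k²−2 strategic agents of each type on the three-layer tree topology (root α, set B of k(k−1)−1 children, and k leaf children Γ_β per β ∈ B). No assignment in which some type T_ℓ has no agent occupying any node of B can be an equilibrium. -/
open Finset

namespace SwapGame

/-- Build a simple graph from a (not necessarily symmetric) boolean relation
by symmetrizing it and removing loops. -/
def mkGraph {V : Type*} (r : V → V → Bool) : SimpleGraph V where
  Adj a b := a ≠ b ∧ (r a b ∨ r b a)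
  symm := ⟨fun {a b} h => ⟨Ne.symm h.1, Or.symm h.2⟩⟩
  loopless := ⟨fun a h => h.1 rfl⟩

instance mkGraph.instDecidableRel {V : Type*} [DecidableEq V] (r : V → V → Bool) :
    DecidableRel (mkGraph r).Adj :=
  fun a b => inferInstanceAs (Decidable (a ≠ b ∧ (r a b ∨ r b a)))

variable {A V K : Type*} [Fintype V] [DecidableEq A] [DecidableEq V] [DecidableEq K]

/-- The assignment obtained from `σ` by swapping the locations of agents `i` and `j`. -/
def swapA (σ : A ≃ V) (i j : A) : A ≃ V := (Equiv.swap i j).trans σ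

/-- The utility of agent `i` under assignment `σ`: the fraction of the neighbors of the
node of `i` that are occupied by agents of the same type (friends of `i`). -/
def util (G : SimpleGraph V) [DecidableRel G.Adj] (c : A → K) (σ : A ≃ V) (i : A) : ℚ :=
  (((G.neighborFinset (σ i)).filter (fun w => c (σ.symm w) = c i)).card : ℚ) /
    ((G.neighborFinset (σ i)).card : ℚ)

/-- Agents `i` and `j` both strictly increase their utility by swapping their locations. -/
def improving (G : SimpleGraph V) [DecidableRel G.Adj] (c : A → K) (σ : A ≃ V)
    (i j : A) : Prop :=
  util G c σ i < util G c (swapA σ i j) i ∧ util G c σ j < util G c (swapA σ i j) j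

/-- An assignment is an equilibrium if no pair of agents can both strictly increase
their utility by swapping positions. -/
def isEquilibrium (G : SimpleGraph V) [DecidableRel G.Adj] (c : A → K) (σ : A ≃ V) : Prop :=
  ¬ ∃ i j : A, improving G c σ i j

/-- The social welfare of an assignment: the sum of the utilities of all agents. -/
def SW [Fintype A] (G : SimpleGraph V) [DecidableRel G.Adj] (c : A → K) (σ : A ≃ V) : ℚ :=
  ∑ i : A, util G c σ i

/-- Agent `i` is exposed: at least one neighbor is occupied by an agent of another type. -/
def exposed (G : SimpleGraph V) [DecidableRel G.Adj] (c : A → K) (σ : A ≃ V) (i : A) : Prop :=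
  ((G.neighborFinset (σ i)).filter (fun w => c (σ.symm w) ≠ c i)).Nonempty

instance exposed.instDecidable (G : SimpleGraph V) [DecidableRel G.Adj] (c : A → K)
    (σ : A ≃ V) : DecidablePred (exposed G c σ) :=
  fun _ => inferInstanceAs (Decidable (Finset.Nonempty _))

/-- The degree of integration of an assignment: the number of exposed agents. -/
def DI [Fintype A] (G : SimpleGraph V) [DecidableRel G.Adj] (c : A → K) (σ : A ≃ V) : ℕ :=
  (univ.filter (fun i : A => exposed G c σ i)).card

end SwapGame

namespace SwapGame

/-- The three-layer tree topology for `k`-swap games: a root, a set `B` of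
`k(k-1)-1` middle nodes (children of the root), and `k` leaf children per middle node. -/
inductive TV (k : ℕ) where
  | root : TV k
  | mid : Fin (k*(k-1)-1) → TV k
  | leaf : Fin (k*(k-1)-1) → Fin k → TV k
  deriving DecidableEq, Fintype

def adjT {k : ℕ} : TV k → TV k → Bool
  | .root, .mid _ => true
  | .mid i, .leaf j _ => i == j
  | _, _ => false

abbrev GT (k : ℕ) : SimpleGraph (TV k) := mkGraph (@adjT k)

/-- Agents: `k` types with `k^2 - 2` agents each; the type of an agent is its first
component. -/
abbrev AgT (k : ℕ) := Fin k × Fin (k^2 - 2)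

end SwapGame

namespace SwapGame

section Aux

variable {A V K : Type*} [Fintype V] [DecidableEq A] [DecidableEq V] [DecidableEq K]

lemma swapA_apply_fst (σ : A ≃ V) (i j : A) : swapA σ i j i = σ j := by
  simp [swapA]

lemma swapA_symm_apply (σ : A ≃ V) (i j : A) (w : V) :
    (swapA σ i j).symm w = Equiv.swap i j (σ.symm w) := by
  simp [swapA]

lemma util_pos_of (G : SimpleGraph V) [DecidableRel G.Adj] (c : A → K) (σ : A ≃ V) (i : A)
    (w : V) (hw : w ∈ G.neighborFinset (σ i)) (hcw : c (σ.symm w) = c i) :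
    0 < util G c σ i := by
  have h1 : 0 < ((G.neighborFinset (σ i)).filter (fun w => c (σ.symm w) = c i)).card :=
    Finset.card_pos.2 ⟨w, Finset.mem_filter.2 ⟨hw, hcw⟩⟩
  have h2 : 0 < (G.neighborFinset (σ i)).card := Finset.card_pos.2 ⟨w, hw⟩
  exact div_pos (by exact_mod_cast h1) (by exact_mod_cast h2)

lemma util_eq_zero_of (G : SimpleGraph V) [DecidableRel G.Adj] (c : A → K) (σ : A ≃ V) (i : A)
    (h : ∀ w ∈ G.neighborFinset (σ i), c (σ.symm w) ≠ c i) :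
    util G c σ i = 0 := by
  simp only [util]
  rw [Finset.filter_false_of_mem h]
  simp

lemma util_lt_one_of (G : SimpleGraph V) [DecidableRel G.Adj] (c : A → K) (σ : A ≃ V) (i : A)
    (w : V) (hw : w ∈ G.neighborFinset (σ i)) (hcw : c (σ.symm w) ≠ c i) :
    util G c σ i < 1 := by
  simp only [util]
  have hss : (G.neighborFinset (σ i)).filter (fun w => c (σ.symm w) = c i) ⊂
      G.neighborFinset (σ i) := by
    refine ⟨Finset.filter_subset _ _, fun hsup => ?_⟩
    exact hcw (Finset.mem_filter.1 (hsup hw)).2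
  have h1 := Finset.card_lt_card hss
  have h2 : 0 < ((G.neighborFinset (σ i)).card : ℚ) := by
    exact_mod_cast Finset.card_pos.2 ⟨w, hw⟩
  rw [div_lt_one h2]
  exact_mod_cast h1

lemma util_eq_one_of (G : SimpleGraph V) [DecidableRel G.Adj] (c : A → K) (σ : A ≃ V) (i : A)
    (hne : (G.neighborFinset (σ i)).Nonempty)
    (h : ∀ w ∈ G.neighborFinset (σ i), c (σ.symm w) = c i) :
    util G c σ i = 1 := by
  simp only [util]
  rw [Finset.filter_true_of_mem h, div_self]
  exact_mod_cast Finset.card_ne_zero.2 hne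

lemma mkGraph_adj {V : Type*} (r : V → V → Bool) (a b : V) :
    (mkGraph r).Adj a b ↔ a ≠ b ∧ (r a b ∨ r b a) := Iff.rfl

@[simp] lemma adjT_mid_leaf {k : ℕ} (b b' : Fin (k*(k-1)-1)) (x : Fin k) :
    adjT (TV.mid b) (TV.leaf b' x) = (b == b') := rfl
@[simp] lemma adjT_leaf_mid {k : ℕ} (b b' : Fin (k*(k-1)-1)) (x : Fin k) :
    adjT (TV.leaf b' x) (TV.mid b) = false := rfl
@[simp] lemma adjT_mid_mid {k : ℕ} (b b' : Fin (k*(k-1)-1)) :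
    adjT (TV.mid b) (TV.mid b') = false := rfl
@[simp] lemma adjT_mid_root {k : ℕ} (b : Fin (k*(k-1)-1)) :
    adjT (TV.mid b) TV.root = false := rfl
@[simp] lemma adjT_root_mid {k : ℕ} (b : Fin (k*(k-1)-1)) :
    adjT TV.root (TV.mid b) = true := rfl
@[simp] lemma adjT_leaf_leaf {k : ℕ} (b b' : Fin (k*(k-1)-1)) (x x' : Fin k) :
    adjT (TV.leaf b x) (TV.leaf b' x') = false := rfl
@[simp] lemma adjT_root_leaf {k : ℕ} (b : Fin (k*(k-1)-1)) (x : Fin k) :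
    adjT TV.root (TV.leaf b x) = false := rfl
@[simp] lemma adjT_leaf_root {k : ℕ} (b : Fin (k*(k-1)-1)) (x : Fin k) :
    adjT (TV.leaf b x) TV.root = false := rfl
@[simp] lemma adjT_root_root {k : ℕ} : adjT (TV.root : TV k) TV.root = false := rfl

lemma mem_nbr_root {k : ℕ} (w : TV k) :
    w ∈ (GT k).neighborFinset TV.root ↔ ∃ b, w = TV.mid b := by
  rw [SimpleGraph.mem_neighborFinset, mkGraph_adj]
  cases w <;> simp

lemma mem_nbr_mid {k : ℕ} (b : Fin (k*(k-1)-1)) (w : TV k) :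
    w ∈ (GT k).neighborFinset (TV.mid b) ↔ w = TV.root ∨ ∃ x, w = TV.leaf b x := by
  rw [SimpleGraph.mem_neighborFinset, mkGraph_adj]
  cases w with
  | root => simp
  | mid b' => simp
  | leaf b' x =>
    constructor
    · rintro ⟨-, h | h⟩
      · have hb : b = b' := by simpa using h
        exact Or.inr ⟨x, by rw [hb]⟩
      · simp at h
    · rintro (h | ⟨y, h⟩)
      · exact absurd h (by simp)
      · obtain ⟨h1, h2⟩ := TV.leaf.inj h
        subst h1; subst h2
        exact ⟨by simp, Or.inl (by simp)⟩

lemma mem_nbr_leaf {k : ℕ} (b : Fin (k*(k-1)-1)) (x : Fin k) (w : TV k) :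
    w ∈ (GT k).neighborFinset (TV.leaf b x) ↔ w = TV.mid b := by
  rw [SimpleGraph.mem_neighborFinset, mkGraph_adj]
  cases w with
  | root => simp
  | leaf b' x' => simp
  | mid b' =>
    constructor
    · rintro ⟨-, h | h⟩
      · simp at h
      · have hb : b' = b := by simpa using h
        rw [hb]
    · rintro h
      obtain h1 := TV.mid.inj h
      subst h1
      exact ⟨by simp, Or.inr (by simp)⟩


lemma improving_A (k : ℕ) (σ : AgT k ≃ TV k) (t : Fin k)
    (b b' : Fin (k*(k-1)-1)) (hbb : b ≠ b')
    (x y : Fin k)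
    (hx : (σ.symm (TV.leaf b x)).1 = t)
    (hy : (σ.symm (TV.leaf b' y)).1 = t)
    (hb : (σ.symm (TV.mid b)).1 ≠ t)
    (hsame : (σ.symm (TV.mid b')).1 = (σ.symm (TV.mid b)).1) :
    improving (GT k) Prod.fst σ (σ.symm (TV.leaf b x)) (σ.symm (TV.mid b')) := by
  set j := σ.symm (TV.leaf b x) with hj
  set i := σ.symm (TV.mid b') with hi
  have hσj : σ j = TV.leaf b x := σ.apply_symm_apply _
  have hσi : σ i = TV.mid b' := σ.apply_symm_apply _
  have hswj : swapA σ j i j = TV.mid b' := by rw [swapA_apply_fst, hσi]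
  have hswi : swapA σ j i i = TV.leaf b x := by
    show σ (Equiv.swap j i i) = _
    rw [Equiv.swap_apply_right, hσj]
  -- distinctness of relevant agents
  have hne1 : σ.symm (TV.leaf b' y) ≠ j := by
    intro h
    have := σ.symm.injective h
    obtain ⟨h1, -⟩ := TV.leaf.inj this
    exact hbb h1.symm
  have hne2 : σ.symm (TV.leaf b' y) ≠ i := by
    intro h
    have := σ.symm.injective h
    simp at this
  have hne3 : σ.symm (TV.mid b) ≠ j := by
    intro h
    have := σ.symm.injective h
    simp at this
  have hne4 : σ.symm (TV.mid b) ≠ i := by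
    intro h
    have := σ.symm.injective h
    exact hbb (TV.mid.inj this)
  constructor
  · -- utility of j increases
    have h0 : util (GT k) Prod.fst σ j = 0 := by
      apply util_eq_zero_of
      intro w hw
      rw [hσj, mem_nbr_leaf] at hw
      subst hw
      show (σ.symm (TV.mid b)).1 ≠ j.1
      rw [hj, hx]
      exact hb
    rw [h0]
    apply util_pos_of _ _ _ _ (TV.leaf b' y)
    · rw [hswj, mem_nbr_mid]
      exact Or.inr ⟨y, rfl⟩
    · rw [swapA_symm_apply, Equiv.swap_apply_of_ne_of_ne hne1 hne2]
      show (σ.symm (TV.leaf b' y)).1 = j.1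
      rw [hj, hx, hy]
  · -- utility of i increases
    have h1 : util (GT k) Prod.fst (swapA σ j i) i = 1 := by
      apply util_eq_one_of
      · exact ⟨TV.mid b, by rw [hswi, mem_nbr_leaf]⟩
      · intro w hw
        rw [hswi, mem_nbr_leaf] at hw
        subst hw
        rw [swapA_symm_apply, Equiv.swap_apply_of_ne_of_ne hne3 hne4]
        show (σ.symm (TV.mid b)).1 = i.1
        rw [hi, hsame]
    rw [h1]
    apply util_lt_one_of _ _ _ _ (TV.leaf b' y)
    · rw [hσi, mem_nbr_mid]
      exact Or.inr ⟨y, rfl⟩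
    · show (σ.symm (TV.leaf b' y)).1 ≠ i.1
      rw [hi, hy, hsame]
      exact hb.symm

lemma improving_B (k : ℕ) (hk : 0 < k) (σ : AgT k ≃ TV k) (t : Fin k)
    (hroot : (σ.symm TV.root).1 = t)
    (hmiss : ∀ b, (σ.symm (TV.mid b)).1 ≠ t)
    (b b'' : Fin (k*(k-1)-1)) (hne : b'' ≠ b)
    (hleaves : ∀ x : Fin k, (σ.symm (TV.leaf b x)).1 = t)
    (hsame : (σ.symm (TV.mid b'')).1 = (σ.symm (TV.mid b)).1) :
    improving (GT k) Prod.fst σ (σ.symm TV.root) (σ.symm (TV.mid b)) := by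
  set j := σ.symm TV.root with hj
  set i := σ.symm (TV.mid b) with hi
  have hσj : σ j = TV.root := σ.apply_symm_apply _
  have hσi : σ i = TV.mid b := σ.apply_symm_apply _
  have hswj : swapA σ j i j = TV.mid b := by rw [swapA_apply_fst, hσi]
  have hswi : swapA σ j i i = TV.root := by
    show σ (Equiv.swap j i i) = _
    rw [Equiv.swap_apply_right, hσj]
  have x0 : Fin k := ⟨0, hk⟩
  have hne1 : σ.symm (TV.leaf b x0) ≠ j := by
    intro h; have := σ.symm.injective h; simp at this
  have hne2 : σ.symm (TV.leaf b x0) ≠ i := by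
    intro h; have := σ.symm.injective h; simp at this
  have hne3 : σ.symm (TV.mid b'') ≠ j := by
    intro h; have := σ.symm.injective h; simp at this
  have hne4 : σ.symm (TV.mid b'') ≠ i := by
    intro h; have := σ.symm.injective h; exact hne (TV.mid.inj this)
  constructor
  · have h0 : util (GT k) Prod.fst σ j = 0 := by
      apply util_eq_zero_of
      intro w hw
      rw [hσj, mem_nbr_root] at hw
      obtain ⟨b', rfl⟩ := hw
      show (σ.symm (TV.mid b')).1 ≠ j.1
      rw [hj, hroot]
      exact hmiss b'
    rw [h0]
    apply util_pos_of _ _ _ _ (TV.leaf b x0)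
    · rw [hswj, mem_nbr_mid]
      exact Or.inr ⟨x0, rfl⟩
    · rw [swapA_symm_apply, Equiv.swap_apply_of_ne_of_ne hne1 hne2]
      show (σ.symm (TV.leaf b x0)).1 = j.1
      rw [hj, hroot, hleaves]
  · have h0 : util (GT k) Prod.fst σ i = 0 := by
      apply util_eq_zero_of
      intro w hw
      rw [hσi, mem_nbr_mid] at hw
      have hit : i.1 ≠ t := by rw [hi]; exact hmiss b
      rcases hw with rfl | ⟨x, rfl⟩
      · show (σ.symm TV.root).1 ≠ i.1
        rw [hroot]; exact fun h => hit h.symm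
      · show (σ.symm (TV.leaf b x)).1 ≠ i.1
        rw [hleaves]; exact fun h => hit h.symm
    rw [h0]
    apply util_pos_of _ _ _ _ (TV.mid b'')
    · rw [hswi, mem_nbr_root]
      exact ⟨b'', rfl⟩
    · rw [swapA_symm_apply, Equiv.swap_apply_of_ne_of_ne hne3 hne4]
      show (σ.symm (TV.mid b'')).1 = i.1
      rw [hi, hsame]


end Aux

end SwapGame

namespace SwapGame

/-- Lemma 3 of the paper: in the `k`-swap game (`k ≥ 3`) with `k² − 2`
strategic agents per type on the three-layer tree, no assignment in which some type has
no agent occupying any middle node (node of `B`) is an equilibrium. -/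
theorem not_equilibrium_of_missing_type_on_mid (k : ℕ) (hk : 3 ≤ k) (σ : AgT k ≃ TV k)
    (hmiss : ∃ t : Fin k, ∀ b : Fin (k*(k-1)-1), (σ.symm (TV.mid b)).1 ≠ t) :
    ¬ isEquilibrium (GT k) Prod.fst σ := by
  obtain ⟨t, ht⟩ := hmiss
  intro heq
  apply heq
  by_cases hA : ∃ b b' : Fin (k*(k-1)-1), ∃ x y : Fin k, b ≠ b' ∧
      (σ.symm (TV.mid b')).1 = (σ.symm (TV.mid b)).1 ∧
      (σ.symm (TV.leaf b x)).1 = t ∧ (σ.symm (TV.leaf b' y)).1 = t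
  · obtain ⟨b, b', x, y, hbb, hsame, hx, hy⟩ := hA
    exact ⟨_, _, improving_A k σ t b b' hbb x y hx hy (ht b) hsame⟩
  · -- counting argument
    set S : Finset (Fin (k*(k-1)-1)) :=
      Finset.univ.filter (fun b => ∃ x, (σ.symm (TV.leaf b x)).1 = t) with hSdef
    have hInj : Set.InjOn (fun b => (σ.symm (TV.mid b)).1) ↑S := by
      intro b hb b' hb' h
      by_contra hne
      obtain ⟨x, hx⟩ := (Finset.mem_filter.1 hb).2
      obtain ⟨y, hy⟩ := (Finset.mem_filter.1 hb').2
      exact hA ⟨b, b', x, y, hne, h.symm, hx, hy⟩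
    have hScard : S.card ≤ k - 1 := by
      have h1 : S.card ≤ ((Finset.univ : Finset (Fin k)).erase t).card := by
        apply Finset.card_le_card_of_injOn _ _ hInj
        intro b hb
        exact Finset.mem_erase.2 ⟨ht b, Finset.mem_univ _⟩
      rwa [Finset.card_erase_of_mem (Finset.mem_univ t), Finset.card_univ,
        Fintype.card_fin] at h1
    set T : Finset (AgT k) := Finset.univ.filter (fun a => a.1 = t) with hTdef
    have hTcard : T.card = k^2 - 2 := by
      have hTeq : T = {t} ×ˢ (Finset.univ : Finset (Fin (k^2-2))) := by
        ext ⟨a1, a2⟩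
        simp [hTdef, Finset.mem_product, Prod.ext_iff, eq_comm]
      rw [hTeq, Finset.card_product]
      simp
    set P : Finset (TV k) :=
      insert TV.root (S.biUnion (fun b => Finset.univ.image (TV.leaf b))) with hPdef
    have hTP : ∀ a ∈ T, σ a ∈ P := by
      intro a ha
      have hat : a.1 = t := (Finset.mem_filter.1 ha).2
      rcases h : σ a with _ | b | ⟨b, x⟩
      · exact Finset.mem_insert_self _ _
      · exfalso
        apply ht b
        have : σ.symm (TV.mid b) = a := by rw [← h, Equiv.symm_apply_apply]
        rw [this, hat]
      · apply Finset.mem_insert_of_mem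
        apply Finset.mem_biUnion.2
        refine ⟨b, ?_, Finset.mem_image.2 ⟨x, Finset.mem_univ _, rfl⟩⟩
        apply Finset.mem_filter.2
        refine ⟨Finset.mem_univ _, ⟨x, ?_⟩⟩
        have : σ.symm (TV.leaf b x) = a := by rw [← h, Equiv.symm_apply_apply]
        rw [this, hat]
    have hPcard : P.card ≤ 1 + S.card * k := by
      have h1 : P.card ≤ (S.biUnion (fun b => Finset.univ.image (TV.leaf b))).card + 1 :=
        Finset.card_insert_le _ _
      have h2 : (S.biUnion (fun b => Finset.univ.image (TV.leaf b))).card ≤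
          ∑ b ∈ S, (Finset.univ.image (TV.leaf b)).card := Finset.card_biUnion_le
      have h3 : ∑ b ∈ S, (Finset.univ.image (TV.leaf b)).card ≤ ∑ _b ∈ S, k := by
        apply Finset.sum_le_sum
        intro b _
        calc (Finset.univ.image (TV.leaf b)).card ≤ (Finset.univ : Finset (Fin k)).card :=
              Finset.card_image_le
          _ = k := by simp
      have h4 : ∑ _b ∈ S, k = S.card * k := by rw [Finset.sum_const, smul_eq_mul]
      omega
    have hcard : T.card ≤ P.card :=
      Finset.card_le_card_of_injOn σ hTP (σ.injective.injOn)
    have key : k^2 - 2 ≤ 1 + (k-1) * k := by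
      have h5 : S.card * k ≤ (k-1) * k := Nat.mul_le_mul_right _ hScard
      omega
    have hk3 : k = 3 := by
      rcases Nat.lt_or_ge k 4 with h | h
      · omega
      · exfalso
        have h1 : (k-1)*k + k = k*k := by
          have h2 : k - 1 + 1 = k := by omega
          calc (k-1)*k + k = ((k-1)+1)*k := by ring
            _ = k*k := by rw [h2]
        have h3 : k^2 = k*k := sq k
        rw [h3] at key
        obtain ⟨u, hu⟩ : ∃ u, (k-1)*k = u := ⟨_, rfl⟩
        rw [hu] at key h1
        obtain ⟨v, hv⟩ : ∃ v, k*k = v := ⟨_, rfl⟩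
        rw [hv] at key h1
        omega
    subst hk3
    -- now k = 3; equality analysis
    have hT7 : T.card = 7 := by rw [hTcard]; norm_num
    have hPge : 7 ≤ P.card := by omega
    have hS2 : S.card = 2 := by omega
    have hP7 : P.card ≤ 7 := by omega
    have himg : T.image σ = P := by
      apply Finset.eq_of_subset_of_card_le
      · intro p hp
        obtain ⟨a, ha, rfl⟩ := Finset.mem_image.1 hp
        exact hTP a ha
      · rw [Finset.card_image_of_injOn σ.injective.injOn]
        omega
    have hall : ∀ p ∈ P, (σ.symm p).1 = t := by
      intro p hp
      rw [← himg] at hp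
      obtain ⟨a, ha, rfl⟩ := Finset.mem_image.1 hp
      rw [Equiv.symm_apply_apply]
      exact (Finset.mem_filter.1 ha).2
    have hroot : (σ.symm TV.root).1 = t := hall _ (Finset.mem_insert_self _ _)
    have hleafS : ∀ b ∈ S, ∀ x, (σ.symm (TV.leaf b x)).1 = t := by
      intro b hb x
      apply hall
      exact Finset.mem_insert_of_mem
        (Finset.mem_biUnion.2 ⟨b, hb, Finset.mem_image.2 ⟨x, Finset.mem_univ _, rfl⟩⟩)
    obtain ⟨b1, hb1, b2, hb2, hbne⟩ := Finset.one_lt_card.1 (by omega : 1 < S.card)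
    have hs12 : (σ.symm (TV.mid b1)).1 ≠ (σ.symm (TV.mid b2)).1 := by
      intro h
      exact hbne (hInj (Finset.mem_coe.2 hb1) (Finset.mem_coe.2 hb2) h)
    have hb3 : ∃ b3 : Fin (3*(3-1)-1), b3 ≠ b1 ∧ b3 ≠ b2 := by
      by_contra h
      push_neg at h
      have hsub : (Finset.univ : Finset (Fin (3*(3-1)-1))) ⊆ {b1, b2} := by
        intro z _
        rcases eq_or_ne z b1 with h1 | h1
        · simp [h1]
        · simp [h z h1]
      have hle := Finset.card_le_card hsub
      have h2 : ({b1, b2} : Finset (Fin (3*(3-1)-1))).card ≤ 2 := by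
        apply le_trans (Finset.card_insert_le _ _)
        simp
      rw [Finset.card_univ] at hle
      have : Fintype.card (Fin (3*(3-1)-1)) = 5 := by simp
      omega
    obtain ⟨b3, hb31, hb32⟩ := hb3
    have hs3 : (σ.symm (TV.mid b3)).1 = (σ.symm (TV.mid b1)).1 ∨
        (σ.symm (TV.mid b3)).1 = (σ.symm (TV.mid b2)).1 := by
      by_contra h
      push_neg at h
      obtain ⟨h1, h2⟩ := h
      have e1 : ((σ.symm (TV.mid b1)).1 : Fin 3).val ≠ t.val :=
        fun hval => ht b1 (Fin.val_injective hval)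
      have e2 : ((σ.symm (TV.mid b2)).1 : Fin 3).val ≠ t.val :=
        fun hval => ht b2 (Fin.val_injective hval)
      have e3 : ((σ.symm (TV.mid b3)).1 : Fin 3).val ≠ t.val :=
        fun hval => ht b3 (Fin.val_injective hval)
      have e4 : ((σ.symm (TV.mid b1)).1 : Fin 3).val ≠ ((σ.symm (TV.mid b2)).1 : Fin 3).val :=
        fun hval => hs12 (Fin.val_injective hval)
      have e5 : ((σ.symm (TV.mid b3)).1 : Fin 3).val ≠ ((σ.symm (TV.mid b1)).1 : Fin 3).val :=
        fun hval => h1 (Fin.val_injective hval)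
      have e6 : ((σ.symm (TV.mid b3)).1 : Fin 3).val ≠ ((σ.symm (TV.mid b2)).1 : Fin 3).val :=
        fun hval => h2 (Fin.val_injective hval)
      have l1 := ((σ.symm (TV.mid b1)).1 : Fin 3).isLt
      have l2 := ((σ.symm (TV.mid b2)).1 : Fin 3).isLt
      have l3 := ((σ.symm (TV.mid b3)).1 : Fin 3).isLt
      have lt := (t : Fin 3).isLt
      omega
    rcases hs3 with h | h
    · exact ⟨_, _, improving_B 3 (by norm_num) σ t hroot ht b1 b3 hb31
        (hleafS b1 hb1) h⟩
    · exact ⟨_, _, improving_B 3 (by norm_num) σ t hroot ht b2 b3 hb32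
        (hleafS b2 hb2) h⟩


end SwapGame
end

section
/- Let v be an equilibrium assignment of a 2-swap game with only strategic agents in which every agent has strictly positive utility. Then for every pair (i, j) consisting of one red agent i and one blue agent j, it holds that u_i(v) + u_j(v) ≥ 1/2. -/
open Finset

namespace SwapGame

/-- Auxiliary: the utility of agent `i` after swapping with an agent `j` of a
different type. -/
lemma util_swapA_eq {A V K : Type*} [Fintype V] [DecidableEq A] [DecidableEq V]
    [DecidableEq K] (G : SimpleGraph V) [DecidableRel G.Adj]
    (c : A → K) (σ : A ≃ V) (i j : A) (hij : c j ≠ c i) :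
    util G c (swapA σ i j) i =
      (((((G.neighborFinset (σ j)).filter (fun w => c (σ.symm w) = c i)).erase
          (σ i)).card : ℚ)) / ((G.neighborFinset (σ j)).card : ℚ) := by
  have hnode : (swapA σ i j) i = σ j := by
    simp [swapA, Equiv.swap_apply_left]
  have hfilter :
      (G.neighborFinset (σ j)).filter (fun w => c ((swapA σ i j).symm w) = c i)
        = ((G.neighborFinset (σ j)).filter (fun w => c (σ.symm w) = c i)).erase (σ i) := by
    ext w
    rw [mem_filter]
    simp only [swapA, Equiv.symm_trans_apply, Equiv.symm_swap, mem_erase, mem_filter,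
      SimpleGraph.mem_neighborFinset]
    constructor
    · rintro ⟨hadj, hc⟩
      by_cases hwi : w = σ i
      · subst hwi
        rw [Equiv.symm_apply_apply, Equiv.swap_apply_left] at hc
        exact absurd hc hij
      · refine ⟨hwi, hadj, ?_⟩
        rw [Equiv.swap_apply_of_ne_of_ne (fun h => hwi (by rw [← h, Equiv.apply_symm_apply]))
          (fun h => (G.ne_of_adj hadj) (by rw [← h, Equiv.apply_symm_apply]))] at hc
        exact hc
    · rintro ⟨hwi, hadj, hc⟩
      refine ⟨hadj, ?_⟩
      rw [Equiv.swap_apply_of_ne_of_ne (fun h => hwi (by rw [← h, Equiv.apply_symm_apply]))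
        (fun h => (G.ne_of_adj hadj) (by rw [← h, Equiv.apply_symm_apply]))]
      exact hc
  rw [util, hnode, hfilter]

/-- Auxiliary: positivity facts from a positive utility. -/
lemma util_pos_facts {A V K : Type*} [Fintype V] [DecidableEq A] [DecidableEq V]
    [DecidableEq K] (G : SimpleGraph V) [DecidableRel G.Adj]
    (c : A → K) (σ : A ≃ V) (k : A) (h : 0 < util G c σ k) :
    (0:ℚ) < ((G.neighborFinset (σ k)).card : ℚ) ∧
      (1:ℚ) ≤ (((G.neighborFinset (σ k)).filter
        (fun w => c (σ.symm w) = c k)).card : ℚ) := by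
  rw [util] at h
  have hd : (0:ℚ) < ((G.neighborFinset (σ k)).card : ℚ) := by
    by_contra hc
    push_neg at hc
    have : ((G.neighborFinset (σ k)).card : ℚ) = 0 := le_antisymm hc (by positivity)
    rw [this, div_zero] at h
    exact lt_irrefl _ h
  refine ⟨hd, ?_⟩
  have hn : (0:ℚ) < (((G.neighborFinset (σ k)).filter
      (fun w => c (σ.symm w) = c k)).card : ℚ) := by
    by_contra hc
    push_neg at hc
    have : (((G.neighborFinset (σ k)).filter
        (fun w => c (σ.symm w) = c k)).card : ℚ) = 0 := le_antisymm hc (by positivity)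
    rw [this, zero_div] at h
    exact lt_irrefl _ h
  exact_mod_cast hn

/-- Auxiliary: the two color classes partition a neighborhood (two colors). -/
lemma neighbor_partition {A V : Type*} [Fintype V] [DecidableEq A] [DecidableEq V]
    (G : SimpleGraph V) [DecidableRel G.Adj]
    (c : A → Fin 2) (σ : A ≃ V) (k k' : A) (h : c k' ≠ c k) :
    ((G.neighborFinset (σ k)).filter (fun w => c (σ.symm w) = c k)).card
      + ((G.neighborFinset (σ k)).filter (fun w => c (σ.symm w) = c k')).card
      = (G.neighborFinset (σ k)).card := by
  have hdec : ∀ t u u' : Fin 2, u' ≠ u → (t = u' ↔ ¬ t = u) := by decide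
  have hcongr : (G.neighborFinset (σ k)).filter (fun w => c (σ.symm w) = c k')
      = (G.neighborFinset (σ k)).filter (fun w => ¬ c (σ.symm w) = c k) := by
    apply Finset.filter_congr
    intro w _
    simpa using hdec (c (σ.symm w)) (c k) (c k') h
  rw [hcongr]
  exact Finset.card_filter_add_card_filter_not _

/-- Auxiliary: if the two utilities sum to less than `1/2`, then `i` strictly
improves by swapping with `j`. -/
lemma improves_of_sum_lt_half {A V : Type*} [Fintype V] [DecidableEq A] [DecidableEq V]
    (G : SimpleGraph V) [DecidableRel G.Adj]
    (c : A → Fin 2) (σ : A ≃ V) (i j : A) (hij : c j ≠ c i)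
    (hpi : 0 < util G c σ i) (hpj : 0 < util G c σ j)
    (hsum : util G c σ i + util G c σ j < 1 / 2) :
    util G c σ i < util G c (swapA σ i j) i := by
  obtain ⟨hdi, hai⟩ := util_pos_facts G c σ i hpi
  obtain ⟨hdj, hbj⟩ := util_pos_facts G c σ j hpj
  set Nj := G.neighborFinset (σ j) with hNj
  set b := (Nj.filter (fun w => c (σ.symm w) = c j)).card with hb
  set b' := (Nj.filter (fun w => c (σ.symm w) = c i)).card with hb'
  set m := ((Nj.filter (fun w => c (σ.symm w) = c i)).erase (σ i)).card with hm
  have hpart : b + b' = Nj.card := neighbor_partition G c σ j i hij.symm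
  have herase : b' ≤ m + 1 := by
    have := Finset.pred_card_le_card_erase
      (s := Nj.filter (fun w => c (σ.symm w) = c i)) (a := σ i)
    omega
  have hnew : util G c (swapA σ i j) i = (m : ℚ) / (Nj.card : ℚ) :=
    util_swapA_eq G c σ i j hij
  rw [hnew]
  simp only [util] at hsum hpi hpj ⊢
  set x := (((G.neighborFinset (σ i)).filter
      (fun w => c (σ.symm w) = c i)).card : ℚ) / ((G.neighborFinset (σ i)).card : ℚ)
  set y := ((b : ℚ)) / ((Nj.card : ℚ)) with hy
  have hpartQ : (b : ℚ) + (b' : ℚ) = (Nj.card : ℚ) := by exact_mod_cast hpart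
  have heraseQ : (b' : ℚ) ≤ (m : ℚ) + 1 := by exact_mod_cast herase
  have hbQ : (1 : ℚ) ≤ (b : ℚ) := hbj
  have hnum : ((Nj.card : ℚ) - 2 * b) ≤ (m : ℚ) := by linarith
  have hdiv : ((Nj.card : ℚ) - 2 * b) / (Nj.card : ℚ) ≤ (m : ℚ) / (Nj.card : ℚ) :=
    (div_le_div_iff_of_pos_right hdj).mpr hnum
  have hrw : ((Nj.card : ℚ) - 2 * b) / (Nj.card : ℚ) = 1 - 2 * y := by
    rw [hy]
    field_simp
  rw [hrw] at hdiv
  linarith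

/-- in a 2-swap game with only strategic agents (two nonempty types,
connected topology), if `v` is an equilibrium assignment in which every agent has
strictly positive utility, then for every red agent `i` and blue agent `j` we have
`u_i(v) + u_j(v) ≥ 1/2`. -/
theorem util_pair_ge_half {A V : Type} [Fintype A] [DecidableEq A]
    [Fintype V] [DecidableEq V] (G : SimpleGraph V) [DecidableRel G.Adj]
    (hconn : G.Connected) (c : A → Fin 2) (hne : ∀ t : Fin 2, ∃ i, c i = t)
    (σ : A ≃ V) (heq : isEquilibrium G c σ) (hpos : ∀ i : A, 0 < util G c σ i)
    (i j : A) (hi : c i = 0) (hj : c j = 1) :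
    1 / 2 ≤ util G c σ i + util G c σ j := by
  by_contra hcon
  push_neg at hcon
  apply heq
  have hij : c j ≠ c i := by rw [hi, hj]; decide
  have hcomm : swapA σ i j = swapA σ j i := by
    unfold swapA
    rw [Equiv.swap_comm]
  refine ⟨i, j, improves_of_sum_lt_half G c σ i j hij (hpos i) (hpos j) hcon, ?_⟩
  rw [hcomm]
  exact improves_of_sum_lt_half G c σ j i hij.symm (hpos j) (hpos i) (by linarith)

end SwapGame
end
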